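/- arXiv:1803.07804 — 2 statements merged into one kernel-verified Lean document; each statement's English description precedes it below -/
import Mathlib

section
/- For all integers N ≥ 1 and n ≥ 1, B_{N,n} = n! · ∑_{k=1}^{n} C(n+1, k+1) ∑_{i_1+⋯+i_k=n, i_1,…,i_k ≥ 0} (−N!)^k / ((N+i_1)! ⋯ (N+i_k)!), where the inner sum is over all k-tuples of nonnegative integers summing to n and C(a,b) denotes the binomial coefficient. -/
/-- The power series ∑_{i≥0} (N!/(N+i)!) xⁱ over ℚ. -/
noncomputable def hgSeries (N : ℕ) : PowerSeries ℚ :=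
  PowerSeries.mk fun i => (N.factorial : ℚ) / ((N + i).factorial : ℚ)

/-- The hypergeometric Bernoulli number `B_{N,n}`, defined so that
`∑ (B_{N,n}/n!) xⁿ` is the multiplicative inverse of `hgSeries N` in ℚ[[x]]. -/
noncomputable def hB (N n : ℕ) : ℚ :=
  (n.factorial : ℚ) * PowerSeries.coeff n (hgSeries N)⁻¹

lemma coeff_pow_tuple (φ : PowerSeries ℚ) (k n : ℕ) :
    PowerSeries.coeff n (φ ^ k) =
      ∑ i ∈ Finset.Nat.antidiagonalTuple k n, ∏ j, PowerSeries.coeff (i j) φ := by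
  induction k generalizing n with
  | zero =>
    cases n with
    | zero => simp [Finset.Nat.antidiagonalTuple_zero_zero]
    | succ m => simp [Finset.Nat.antidiagonalTuple_zero_succ]
  | succ k ih =>
    rw [pow_succ', PowerSeries.coeff_mul]
    simp_rw [ih, Finset.mul_sum]
    rw [Finset.sum_sigma']
    refine Finset.sum_nbij' (fun x => Fin.cons x.1.1 x.2)
      (fun f => ⟨(f 0, ∑ j : Fin k, f j.succ), Fin.tail f⟩) ?_ ?_ ?_ ?_ ?_
    · rintro ⟨⟨a, b⟩, i⟩ hx
      simp only [Finset.mem_sigma, Finset.HasAntidiagonal.mem_antidiagonal,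
        Finset.Nat.mem_antidiagonalTuple] at hx
      simp only [Finset.Nat.mem_antidiagonalTuple, Fin.sum_cons, hx.2, hx.1]
    · intro f hf
      simp only [Finset.Nat.mem_antidiagonalTuple] at hf
      simp only [Finset.mem_sigma, Finset.HasAntidiagonal.mem_antidiagonal,
        Finset.Nat.mem_antidiagonalTuple]
      refine ⟨?_, rfl⟩
      rw [← hf, Fin.sum_univ_succ]
    · rintro ⟨⟨a, b⟩, i⟩ hx
      simp only [Finset.mem_sigma, Finset.mem_antidiagonal,
        Finset.Nat.mem_antidiagonalTuple] at hx
      refine Sigma.ext ?_ ?_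
      · simp [Fin.tail_cons, hx.2]
      · simp [Fin.tail_cons]
    · intro f hf
      exact Fin.cons_self_tail f
    · rintro ⟨⟨a, b⟩, i⟩ hx
      rw [Fin.prod_univ_succ]
      simp [Fin.tail_cons]

lemma constantCoeff_hgSeries (N : ℕ) : PowerSeries.constantCoeff (hgSeries N) = 1 := by
  have : PowerSeries.constantCoeff (hgSeries N) = PowerSeries.coeff 0 (hgSeries N) := by
    simp
  rw [this, hgSeries, PowerSeries.coeff_mk]
  simp [div_self, Nat.factorial_ne_zero]

lemma coeff_inv_sum (f : PowerSeries ℚ) (h1 : PowerSeries.constantCoeff f = 1) (n : ℕ) :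
    PowerSeries.coeff n f⁻¹ =
      ∑ m ∈ Finset.range (n + 1), PowerSeries.coeff n ((1 - f) ^ m) := by
  have h0 : PowerSeries.constantCoeff f ≠ 0 := by rw [h1]; exact one_ne_zero
  have hinv : f⁻¹ * f = 1 := PowerSeries.inv_mul_cancel f h0
  have hgeom : f * ∑ m ∈ Finset.range (n + 1), (1 - f) ^ m = 1 - (1 - f) ^ (n + 1) := by
    have hg := geom_sum_mul (1 - f) (n + 1)
    linear_combination -hg
  have hdvd : (PowerSeries.X : PowerSeries ℚ) ^ (n + 1) ∣ f⁻¹ * (1 - f) ^ (n + 1) := by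
    refine Dvd.dvd.mul_left ?_ _
    refine pow_dvd_pow_of_dvd ?_ _
    rw [PowerSeries.X_dvd_iff]
    simp [h1]
  have hz : PowerSeries.coeff n (f⁻¹ * (1 - f) ^ (n + 1)) = 0 :=
    (PowerSeries.X_pow_dvd_iff.mp hdvd) n (Nat.lt_succ_self n)
  have key : f⁻¹ = (∑ m ∈ Finset.range (n + 1), (1 - f) ^ m) + f⁻¹ * (1 - f) ^ (n + 1) := by
    calc f⁻¹ = f⁻¹ * 1 := by ring
    _ = f⁻¹ * (f * (∑ m ∈ Finset.range (n + 1), (1 - f) ^ m) + (1 - f) ^ (n + 1)) := by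
        rw [hgeom]; ring
    _ = (f⁻¹ * f) * (∑ m ∈ Finset.range (n + 1), (1 - f) ^ m) + f⁻¹ * (1 - f) ^ (n + 1) := by
        ring
    _ = _ := by rw [hinv]; ring
  rw [key, map_add, hz, add_zero, map_sum]

theorem stmt3 (N n : ℕ) (hN : 1 ≤ N) (hn : 1 ≤ n) :
    hB N n = (n.factorial : ℚ) * ∑ k ∈ Finset.Icc 1 n, ((n + 1).choose (k + 1) : ℚ) *
      ∑ i ∈ Finset.Nat.antidiagonalTuple k n,
        (-(N.factorial : ℚ)) ^ k / ∏ j, ((N + i j).factorial : ℚ) := by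
  set f := hgSeries N with hf
  have h1 : PowerSeries.constantCoeff f = 1 := constantCoeff_hgSeries N
  rw [hB]
  congr 1
  rw [coeff_inv_sum f h1 n]
  have hexp : ∀ m : ℕ, PowerSeries.coeff n ((1 - f) ^ m) =
      ∑ j ∈ Finset.range (m + 1),
        (m.choose j : ℚ) * ((-1 : ℚ) ^ j * PowerSeries.coeff n (f ^ j)) := by
    intro m
    have hb : (1 - f) ^ m = ∑ j ∈ Finset.range (m + 1), (-f) ^ j * (m.choose j : PowerSeries ℚ) := by
      rw [sub_eq_neg_add]
      simpa using add_pow (-f) 1 m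
    rw [hb, map_sum]
    refine Finset.sum_congr rfl fun j _ => ?_
    have hc : (m.choose j : PowerSeries ℚ) = PowerSeries.C (m.choose j : ℚ) :=
      (map_natCast PowerSeries.C (m.choose j)).symm
    have hneg : (-1 : PowerSeries ℚ) = PowerSeries.C (-1) := by simp
    rw [neg_pow, hc, hneg, ← map_pow, mul_comm, ← mul_assoc, ← map_mul,
      PowerSeries.coeff_C_mul]
    ring
  simp_rw [hexp]
  rw [Finset.sum_comm' (t' := Finset.range (n + 1)) (s' := fun j => Finset.Icc j n)
    (by intro m j
        simp only [Finset.mem_range, Finset.mem_Icc]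
        omega)]
  have hinner : ∀ j ∈ Finset.range (n + 1),
      ∑ m ∈ Finset.Icc j n, (m.choose j : ℚ) * ((-1 : ℚ) ^ j * PowerSeries.coeff n (f ^ j)) =
      ((n + 1).choose (j + 1) : ℚ) * ((-1 : ℚ) ^ j * PowerSeries.coeff n (f ^ j)) := by
    intro j _
    rw [← Finset.sum_mul]
    congr 1
    rw [← Nat.cast_sum]
    rw [Nat.sum_Icc_choose]
  rw [Finset.sum_congr rfl hinner]
  have hsplit : Finset.range (n + 1) = insert 0 (Finset.Icc 1 n) := by
    ext x
    simp only [Finset.mem_range, Finset.mem_insert, Finset.mem_Icc]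
    omega
  rw [hsplit, Finset.sum_insert (by simp)]
  have h0term : ((n + 1).choose (0 + 1) : ℚ) * ((-1 : ℚ) ^ 0 * PowerSeries.coeff n (f ^ 0)) = 0 := by
    have : PowerSeries.coeff n (1 : PowerSeries ℚ) = 0 := by
      rw [PowerSeries.coeff_one, if_neg (by omega)]
    simp [this]
  rw [h0term, zero_add]
  refine Finset.sum_congr rfl fun k hk => ?_
  congr 1
  rw [coeff_pow_tuple, Finset.mul_sum]
  refine Finset.sum_congr rfl fun i hi => ?_
  have hcoe : ∀ j : Fin k, PowerSeries.coeff (i j) f = (N.factorial : ℚ) / ((N + i j).factorial : ℚ) := by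
    intro j
    rw [hf, hgSeries, PowerSeries.coeff_mk]
  simp_rw [hcoe]
  rw [Finset.prod_div_distrib, Finset.prod_const, Finset.card_univ, Fintype.card_fin]
  ring
end

section
/- For all integers N ≥ 2 and n ≥ 1, B_{N,n} = (N/(N+n)) · ( B_{N−1,n} + ∑_{m=1}^{n−1} C(n, n−m+1) · B_{N,m} · B_{N−1,n−m+1} ), where C(a,b) denotes the binomial coefficient. -/
open PowerSeries

lemma hg_coeff (N i : ℕ) : coeff i (hgSeries N) = (N.factorial : ℚ) / ((N + i).factorial : ℚ) := by
  simp [hgSeries]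

lemma hg_const (N : ℕ) : constantCoeff (hgSeries N) = 1 := by
  rw [← coeff_zero_eq_constantCoeff, hg_coeff]
  have : (N.factorial : ℚ) ≠ 0 := by positivity
  simp [this]

lemma hg_ne (N : ℕ) : hgSeries N ≠ 0 := by
  intro h
  have := hg_const N
  rw [h] at this
  simp at this

lemma hg_mul_inv (N : ℕ) : hgSeries N * (hgSeries N)⁻¹ = 1 :=
  PowerSeries.mul_inv_cancel _ (by rw [hg_const]; norm_num)

lemma keyA (M : ℕ) :
    C ((M+1 : ℕ) : ℚ) * hgSeries M = C ((M+1 : ℕ) : ℚ) + X * hgSeries (M+1) := by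
  ext i
  cases i with
  | zero => simp [coeff_zero_eq_constantCoeff, map_mul, map_sub, map_add, hg_const]
  | succ j =>
      rw [map_add, coeff_C_mul, coeff_succ_C, hg_coeff, coeff_succ_X_mul, hg_coeff]
      have h1 : (M + (j+1)) = (M + 1 + j) := by omega
      rw [h1]
      have h2 : ((M+1).factorial : ℚ) = (M+1) * M.factorial := by
        rw [Nat.factorial_succ]; push_cast; ring
      rw [h2]
      have h3 : ((M+1+j).factorial : ℚ) ≠ 0 := by positivity
      field_simp
      push_cast; ring

lemma keyB (M : ℕ) :
    C ((M+1 : ℕ) : ℚ) * (hgSeries M - hgSeries (M+1)) = X * d⁄dX ℚ (hgSeries (M+1)) := by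
  ext i
  cases i with
  | zero => simp [coeff_zero_eq_constantCoeff, map_mul, map_sub, map_add, hg_const]
  | succ j =>
      rw [coeff_C_mul, map_sub, hg_coeff, hg_coeff, coeff_succ_X_mul, coeff_derivative, hg_coeff]
      have h1 : (M + (j+1)) = (M + 1 + j) := by omega
      rw [h1]
      have h4 : (M + 1 + (j+1)) = (M + 1 + j + 1) := by omega
      rw [h4]
      have h2 : ((M+1).factorial : ℚ) = (M+1) * M.factorial := by
        rw [Nat.factorial_succ]; push_cast; ring
      have h5 : ((M+1+j+1).factorial : ℚ) = (M+1+j+1) * (M+1+j).factorial := by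
        rw [Nat.factorial_succ]; push_cast; ring
      rw [h2, h5]
      have h3 : ((M+1+j).factorial : ℚ) ≠ 0 := by positivity
      have h6 : ((M:ℚ)+1+j+1) ≠ 0 := by positivity
      field_simp
      push_cast; ring

lemma main_series (M : ℕ) :
    (hgSeries (M+1))⁻¹ + d⁄dX ℚ (hgSeries (M+1))⁻¹ =
      (hgSeries M)⁻¹ + d⁄dX ℚ (hgSeries (M+1))⁻¹ * (hgSeries M)⁻¹ := by
  set a := hgSeries (M+1) with ha_def
  set b := hgSeries M with hb_def
  have h1 : a * a⁻¹ = 1 := hg_mul_inv _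
  have h2 : b * b⁻¹ = 1 := hg_mul_inv _
  have hdG : d⁄dX ℚ a⁻¹ = -a⁻¹^2 * d⁄dX ℚ a := derivative_inv' a
  have K1 := keyA M
  have K2 := keyB M
  rw [← ha_def, ← hb_def] at K1 K2
  have hCne : (C ((M+1:ℕ):ℚ)) ≠ 0 := by
    intro h
    have := congrArg constantCoeff h
    simp at this
    exact_mod_cast this
  have hc : (C ((M+1:ℕ):ℚ)) * a^2 * b ≠ 0 :=
    mul_ne_zero (mul_ne_zero hCne (pow_ne_zero _ (hg_ne _))) (hg_ne _)
  apply mul_left_cancel₀ hc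
  rw [hdG]
  linear_combination (C ((M+1:ℕ):ℚ) * (a*b - b*(d⁄dX ℚ a)*(a*a⁻¹+1) + (d⁄dX ℚ a)*(a*a⁻¹+1))) * h1
    + (C ((M+1:ℕ):ℚ) * ((d⁄dX ℚ a)*(a*a⁻¹)^2 - a^2)) * h2
    + a * K2 - (d⁄dX ℚ a) * K1

lemma inv_coeff_zero (N : ℕ) : coeff 0 (hgSeries N)⁻¹ = 1 := by
  rw [coeff_zero_eq_constantCoeff, PowerSeries.constantCoeff_inv, hg_const, inv_one]

lemma inv_coeff_one (M : ℕ) : coeff 1 (hgSeries M)⁻¹ = -(1/((M:ℚ)+1)) := by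
  have h := congrArg (coeff 1) (hg_mul_inv M)
  rw [PowerSeries.coeff_mul, Finset.Nat.sum_antidiagonal_eq_sum_range_succ_mk] at h
  simp [Finset.sum_range_succ, hg_coeff, inv_coeff_zero, coeff_one] at h
  have h1 : (M.factorial : ℚ) ≠ 0 := by positivity
  have h2 : ((M+1).factorial : ℚ) = ((M:ℚ)+1) * M.factorial := by
    rw [Nat.factorial_succ]; push_cast; ring
  have h3 : ((M:ℚ)+1) ≠ 0 := by positivity
  rw [div_self h1, one_mul, h2] at h
  have h4 : (coeff 1) (hgSeries M)⁻¹ * ((M:ℚ)+1) * M.factorial = (-1) * M.factorial := by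
    field_simp at h; linear_combination (M.factorial : ℚ) * h
  have h5 := mul_right_cancel₀ h1 h4
  field_simp
  linarith

theorem stmt8 (N n : ℕ) (hN : 2 ≤ N) (hn : 1 ≤ n) :
    hB N n = ((N : ℚ) / ((N : ℚ) + n)) *
      (hB (N - 1) n + ∑ m ∈ Finset.Icc 1 (n - 1),
        (n.choose (n - m + 1) : ℚ) * hB N m * hB (N - 1) (n - m + 1)) := by
  obtain ⟨M, rfl⟩ : ∃ M, N = M + 1 := ⟨N-1, by omega⟩
  obtain ⟨p, rfl⟩ : ∃ p, n = p + 1 := ⟨n-1, by omega⟩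
  have hM : 1 ≤ M := by omega
  simp only [Nat.add_sub_cancel]
  have hmain := congrArg (coeff (p+1)) (main_series M)
  rw [map_add, map_add, coeff_derivative, PowerSeries.coeff_mul,
    Finset.Nat.sum_antidiagonal_eq_sum_range_succ_mk] at hmain
  simp only [coeff_derivative] at hmain
  rw [Finset.sum_range_succ, Finset.sum_range_succ] at hmain
  have e1 : p + 1 - p = 1 := by omega
  have e2 : p + 1 - (p + 1) = 0 := by omega
  rw [e1, e2, inv_coeff_zero, inv_coeff_one] at hmain
  -- turn the target sum into factorial-scaled range sum
  have hT : ((p+1).factorial : ℚ) *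
      ∑ k ∈ Finset.range p,
        coeff (k+1) (hgSeries (M+1))⁻¹ * ((k:ℚ)+1) * coeff (p+1-k) (hgSeries M)⁻¹
      = ∑ m ∈ Finset.Icc 1 p,
        ((p+1).choose (p+1-m+1) : ℚ) * hB (M+1) m * hB M (p+1-m+1) := by
    rw [Finset.mul_sum]
    refine Finset.sum_bij' (fun k _ => k + 1) (fun m _ => m - 1) ?_ ?_ ?_ ?_ ?_
    · intro k hk; simp only [Finset.mem_range] at hk; simp only [Finset.mem_Icc]; omega
    · intro m hm; simp only [Finset.mem_Icc] at hm; simp only [Finset.mem_range]; omega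
    · intro k hk; show k + 1 - 1 = k; omega
    · intro m hm; simp only [Finset.mem_Icc] at hm; show m - 1 + 1 = m; omega
    · intro k hk
      simp only [Finset.mem_range] at hk
      have e3 : p + 1 - (k+1) + 1 = p + 1 - k := by omega
      rw [e3, hB, hB]
      have hc : (p+1).choose (p+1-k) = (p+1).choose k := Nat.choose_symm (by omega)
      have hf : (p+1).choose k * k.factorial * ((p+1)-k).factorial = (p+1).factorial :=
        Nat.choose_mul_factorial_mul_factorial (by omega)
      have hf' : ((p+1).choose k : ℚ) * k.factorial * ((p+1)-k).factorial = (p+1).factorial := by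
        exact_mod_cast congrArg (Nat.cast : ℕ → ℚ) hf
      have hnat : (p+1).factorial * (k+1)
          = (p+1).choose (p+1-k) * (k+1).factorial * (p+1-k).factorial := by
        rw [hc, show (k+1).factorial = (k+1) * k.factorial from Nat.factorial_succ k, ← hf]; ring
      have hkey : ((p+1).factorial : ℚ) * ((k:ℚ)+1)
          = ((p+1).choose (p+1-k) : ℚ) * (k+1).factorial * (p+1-k).factorial := by
        exact_mod_cast congrArg (Nat.cast : ℕ → ℚ) hnat
      linear_combination (coeff (k+1) (hgSeries (M+1))⁻¹ * coeff (p+1-k) (hgSeries M)⁻¹) * hkey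
  rw [hB, hB, ← hT]
  have hM1 : ((M:ℚ)+1) ≠ 0 := by positivity
  have hMn : ((M:ℚ)+1) + ((p:ℚ)+1) ≠ 0 := by positivity
  have hfac : ((p+1).factorial : ℚ) ≠ 0 := by positivity
  push_cast
  field_simp at hmain
  rw [div_mul_eq_mul_div, eq_div_iff hMn]
  linear_combination ((p+1).factorial : ℚ) * hmain
end
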